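/- Let κ ∈ ℂ with |κ| < 1 and let 𝓜 ∈ ℂ satisfy |(𝓜 - i)/(𝓜 + i)| ≤ |κ| (with 𝓜 ≠ -i). Then (1-|κ|)/(1+|κ|) ≤ Im 𝓜 ≤ (1+|κ|)/(1-|κ|). -/

import Mathlib

open Complex

theorem imaginary_part_bounds
    (κ 𝓜 : ℂ) (hκ : ‖κ‖ < 1) (h𝓜 : 𝓜 ≠ -I)
    (h : ‖(𝓜 - I) / (𝓜 + I)‖ ≤ ‖κ‖) :
    (1 - ‖κ‖) / (1 + ‖κ‖) ≤ 𝓜.im ∧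
      𝓜.im ≤ (1 + ‖κ‖) / (1 - ‖κ‖) := by
  set k := ‖κ‖ with hk
  have hk0 : 0 ≤ k := norm_nonneg κ
  have hne : 𝓜 + I ≠ 0 := by
    intro hzero
    apply h𝓜
    linear_combination hzero
  have habs : ‖𝓜 - I‖ ≤ k * ‖𝓜 + I‖ := by
    rw [norm_div] at h
    rw [div_le_iff₀ (norm_pos_iff.mpr hne)] at h
    exact h
  have hsq : ‖𝓜 - I‖ ^ 2 ≤ (k * ‖𝓜 + I‖) ^ 2 := by
    apply pow_le_pow_left₀ (norm_nonneg _) habs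
  rw [mul_pow, Complex.sq_norm (𝓜 - I), Complex.sq_norm (𝓜 + I)] at hsq
  set x := 𝓜.re
  set y := 𝓜.im
  have h1 : Complex.normSq (𝓜 - I) = x ^ 2 + (y - 1) ^ 2 := by
    simp [Complex.normSq_apply, Complex.sub_re, Complex.sub_im]
    ring
  have h2 : Complex.normSq (𝓜 + I) = x ^ 2 + (y + 1) ^ 2 := by
    simp [Complex.normSq_apply, Complex.add_re, Complex.add_im]
    ring
  rw [h1, h2] at hsq
  have hx2 : (0:ℝ) ≤ x ^ 2 := sq_nonneg x
  have hq : ((1 + k) * y - (1 - k)) * ((1 - k) * y - (1 + k)) ≤ -(1 - k ^ 2) * x ^ 2 := by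
    nlinarith [hsq]
  constructor
  · rw [div_le_iff₀ (by linarith)]
    by_contra hlt
    push_neg at hlt
    have hy1 : y < 1 := by nlinarith
    have hA : (1 + k) * y - (1 - k) < 0 := by nlinarith
    have hB : (1 - k) * y - (1 + k) < 0 := by nlinarith
    have hpos := mul_pos_of_neg_of_neg hA hB
    have hnn : (0:ℝ) ≤ (1 - k ^ 2) * x ^ 2 :=
      mul_nonneg (by nlinarith) hx2
    linarith
  · rw [le_div_iff₀ (by linarith)]
    by_contra hlt
    push_neg at hlt
    have hy1 : 1 < y := by nlinarith
    have hA : 0 < (1 + k) * y - (1 - k) := by nlinarith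
    have hB : 0 < (1 - k) * y - (1 + k) := by nlinarith
    have hpos := mul_pos hA hB
    have hnn : (0:ℝ) ≤ (1 - k ^ 2) * x ^ 2 :=
      mul_nonneg (by nlinarith) hx2
    linarith
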